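/- The binary-search learner in the natural-number guessing game, defined by states C = ℕ ⊎ (ℕ × ℕ) (where inl n represents the half-open interval [n, ∞) and inr (n, m) the closed interval [n, m]), initial state q₀ = inl 0, and strategy c(inl n) = (2·n + 1, too-low ↦ inl (2·n + 2), too-high ↦ inr (n, 2·n)) and c(inr (n, m)) = (⌊(n+m)/2⌋, too-low ↦ inr (min m (⌊(n+m)/2⌋ + 1), m), too-high ↦ inr (n, max n (⌊(n+m)/2⌋ − 1))) (with truncated subtraction), finds every secret d ∈ ℕ within 3 + 2·⌊log₂ d⌋ rounds against every teacher, where ⌊log₂ d⌋ denotes Nat.log 2 d (so ⌊log₂ 0⌋ = 0). -/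

import Mathlib

/-- The two possible wrong-guess answers of the teacher. -/
inductive W : Type
  | tooHigh : W
  | tooLow : W
  deriving DecidableEq

/-- An answer `w` is consistent with a secret `d` for a guess `H`. -/
def Consistent (w : W) (H d : ℕ) : Prop :=
  (w = W.tooLow ∧ H < d) ∨ (w = W.tooHigh ∧ H > d)

/-- The secret `d` is still possible after `n` rounds from the state pair `(q, s)`. -/
def StillPossible {C T : Type} (c : C → ℕ × (W → C)) (δ : T × ℕ → Option (W × T))
    (d : ℕ) : ℕ → C × T → Prop
  | 0, _ => True
  | n + 1, (q, s) =>
      ∃ (w : W) (s' : T),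
        δ (s, (c q).1) = some (w, s') ∧
        Consistent w (c q).1 d ∧
        StillPossible c δ d n ((c q).2 w, s')

/-- The state space of the binary-search learner:
`Sum.inl n` represents the half-open interval `[n, ∞)`,
`Sum.inr (n, m)` represents the closed interval `[n, m]`. -/
abbrev BisectState : Type := ℕ ⊕ ℕ × ℕ

/-- The strategy of the binary-search learner. -/
def bisect : BisectState → ℕ × (W → BisectState)
  | Sum.inl n =>
      (2 * n + 1, fun w =>
        match w with
        | W.tooLow => Sum.inl (2 * n + 2)
        | W.tooHigh => Sum.inr (n, 2 * n))
  | Sum.inr (n, m) =>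
      ((n + m) / 2, fun w =>
        match w with
        | W.tooLow => Sum.inr (min m ((n + m) / 2 + 1), m)
        | W.tooHigh => Sum.inr (n, max n ((n + m) / 2 - 1)))

lemma sp_mono {C T : Type} (c : C → ℕ × (W → C)) (δ : T × ℕ → Option (W × T)) (d : ℕ) :
    ∀ n (q : C) (s : T), StillPossible c δ d (n + 1) (q, s) → StillPossible c δ d n (q, s) := by
  intro n
  induction n with
  | zero => intro q s _; trivial
  | succ n ih =>
    rintro q s ⟨w, s', h1, h2, h3⟩
    exact ⟨w, s', h1, h2, ih _ _ h3⟩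

lemma sp_mono' {C T : Type} (c : C → ℕ × (W → C)) (δ : T × ℕ → Option (W × T)) (d : ℕ)
    {k m : ℕ} (h : k ≤ m) (q : C) (s : T) :
    StillPossible c δ d m (q, s) → StillPossible c δ d k (q, s) := by
  obtain ⟨t, rfl⟩ := Nat.exists_eq_add_of_le h
  induction t with
  | zero => exact id
  | succ t ih => exact fun hm => ih (Nat.le_add_right _ _) (sp_mono c δ d (k + t) q s hm)

lemma interval_lemma {T : Type} (δ : T × ℕ → Option (W × T)) (d : ℕ) :
    ∀ k n m (s : T), n ≤ d → d ≤ m → m + 1 ≤ n + 2 ^ k →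
      ¬ StillPossible bisect δ d (k + 1) (Sum.inr (n, m), s) := by
  intro k
  induction k with
  | zero =>
    intro n m s hnd hdm hnm
    rintro ⟨w, s', h1, h2, h3⟩
    simp only [bisect, Consistent] at h2
    rcases h2 with ⟨_, h⟩ | ⟨_, h⟩ <;> omega
  | succ k ih =>
    intro n m s hnd hdm hnm
    rintro ⟨w, s', h1, h2, h3⟩
    have hp : 1 ≤ 2 ^ k := Nat.one_le_two_pow
    have h2p : 2 ^ (k + 1) = 2 * 2 ^ k := by ring
    simp only [bisect, Consistent] at h2 h3
    rcases h2 with ⟨hw, h⟩ | ⟨hw, h⟩ <;> subst hw <;> simp only [] at h3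
    · exact ih (min m ((n + m) / 2 + 1)) m s' (by omega) hdm (by omega) h3
    · exact ih n (max n ((n + m) / 2 - 1)) s' hnd (by omega) (by omega) h3

lemma inl_lemma {T : Type} (δ : T × ℕ → Option (W × T)) (d : ℕ) :
    ∀ R j (s : T), 2 ^ (j + 1) ≤ d + 2 → j ≤ Nat.log 2 d →
      R + j = 3 + 2 * Nat.log 2 d →
      ¬ StillPossible bisect δ d R (Sum.inl (2 ^ (j + 1) - 2), s) := by
  intro R
  induction R with
  | zero => intro j s _ h2 h3; omega
  | succ R ih =>
    intro j s h1 h2 hR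
    rintro ⟨w, s', hδ, hcon, hsp⟩
    have hp1 : 2 ≤ 2 ^ (j + 1) := by
      calc 2 = 2 ^ 1 := rfl
      _ ≤ 2 ^ (j + 1) := Nat.pow_le_pow_right (by norm_num) (by omega)
    have hp2 : 2 ^ (j + 2) = 2 * 2 ^ (j + 1) := by ring
    simp only [bisect, Consistent] at hcon hsp
    rcases hcon with ⟨hw, h⟩ | ⟨hw, h⟩ <;> subst hw <;> simp only [] at hsp
    · -- tooLow : d > 2 * (2^(j+1) - 2) + 1, move to inl (2^(j+2) - 2)
      have hd1 : 2 ^ (j + 2) ≤ d + 2 := by omega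
      have hd0 : d ≠ 0 := by omega
      have hlog : j + 1 ≤ Nat.log 2 d := by
        rw [Nat.le_log_iff_pow_le (by norm_num) hd0]
        omega
      have hst : (Sum.inl (2 * (2 ^ (j + 1) - 2) + 2) : BisectState)
          = Sum.inl (2 ^ (j + 2) - 2) := by
        congr 1; omega
      rw [hst] at hsp
      exact ih (j + 1) s' hd1 hlog (by omega) hsp
    · -- tooHigh : d < 2 * (2^(j+1) - 2) + 1, move to inr (2^(j+1)-2, 2*(2^(j+1)-2))
      have hsp' : StillPossible bisect δ d (j + 2)
          (Sum.inr (2 ^ (j + 1) - 2, 2 * (2 ^ (j + 1) - 2)), s') :=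
        sp_mono' bisect δ d (by omega) _ s' hsp
      exact interval_lemma δ d (j + 1) (2 ^ (j + 1) - 2) (2 * (2 ^ (j + 1) - 2)) s'
        (by omega) (by omega) (by omega) hsp'

/-- The binary-search learner finds every secret `d` within
`3 + 2 * ⌊log₂ d⌋` rounds against every teacher. -/
theorem bisect_learner_bound
    {T : Type} (s₀ : T) (δ : T × ℕ → Option (W × T)) (d : ℕ) :
    ¬ StillPossible bisect δ d (3 + 2 * Nat.log 2 d) (Sum.inl 0, s₀) := by
  have := inl_lemma δ d (3 + 2 * Nat.log 2 d) 0 s₀ (by norm_num) (by omega) (by omega)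
  simpa using this
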